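/- The twenty tetrahedra formed by coning each face of a regular icosahedron to its center are acute: each such tetrahedron, with base an equilateral triangle face of the icosahedron and apex the icosahedron's center, has all six dihedral angles strictly less than π/2. -/

import Mathlib

set_option maxHeartbeats 1000000
open Real EuclideanGeometry

/-- The dihedral angle of the tetrahedron `abcd` along the edge `ab`:
the angle between the components of `c - a` and `d - a` orthogonal to `b - a`. -/
noncomputable def dihedralAngle (a b c d : EuclideanSpace ℝ (Fin 3)) : ℝ :=
  InnerProductGeometry.angle
    ((c - a) - ((inner ℝ (c - a) (b - a) : ℝ) / (inner ℝ (b - a) (b - a) : ℝ)) • (b - a))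
    ((d - a) - ((inner ℝ (d - a) (b - a) : ℝ) / (inner ℝ (b - a) (b - a) : ℝ)) • (b - a))

/-- A tetrahedron is acute if all six of its dihedral angles are strictly less than `π/2`. -/
def IsAcuteTetra (a b c d : EuclideanSpace ℝ (Fin 3)) : Prop :=
  dihedralAngle a b c d < π / 2 ∧ dihedralAngle a c b d < π / 2 ∧
  dihedralAngle a d b c < π / 2 ∧ dihedralAngle b c a d < π / 2 ∧
  dihedralAngle b d a c < π / 2 ∧ dihedralAngle c d a b < π / 2

lemma angle_lt_of_inner_pos {V : Type*} [NormedAddCommGroup V] [InnerProductSpace ℝ V]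
    {u v : V} (h : 0 < (inner ℝ u v : ℝ)) : InnerProductGeometry.angle u v < π / 2 := by
  have hu : u ≠ 0 := by rintro rfl; simp at h
  have hv : v ≠ 0 := by rintro rfl; simp at h
  have h1 : 0 < ‖u‖ := norm_pos_iff.mpr hu
  have h2 : 0 < ‖v‖ := norm_pos_iff.mpr hv
  rw [InnerProductGeometry.angle, Real.arccos_lt_pi_div_two]
  exact div_pos h (mul_pos h1 h2)

lemma inner_eq_dist (p x y : EuclideanSpace ℝ (Fin 3)) :
    (inner ℝ (x - p) (y - p) : ℝ) = (dist p x ^ 2 + dist p y ^ 2 - dist x y ^ 2) / 2 := by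
  have h := norm_sub_sq_real (x - p) (y - p)
  have hxy : x - p - (y - p) = x - y := by abel
  rw [hxy] at h
  rw [dist_eq_norm, dist_eq_norm, dist_eq_norm, norm_sub_rev p x, norm_sub_rev p y]
  nlinarith [h]

lemma dihedral_lt (p q x y : EuclideanSpace ℝ (Fin 3)) (hpq : p ≠ q)
    (h : 0 < (inner ℝ (x - p) (y - p) : ℝ) -
      (inner ℝ (x - p) (q - p) : ℝ) * (inner ℝ (y - p) (q - p) : ℝ) / (inner ℝ (q - p) (q - p) : ℝ)) :
    dihedralAngle p q x y < π / 2 := by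
  unfold dihedralAngle
  apply angle_lt_of_inner_pos
  have hq : q - p ≠ 0 := sub_ne_zero.mpr (Ne.symm hpq)
  have hqq : (inner ℝ (q - p) (q - p) : ℝ) ≠ 0 := inner_self_ne_zero.mpr hq
  set X := x - p with hX
  set Y := y - p with hY
  set U := q - p with hU
  have expand : (inner ℝ (X - ((inner ℝ X U : ℝ) / (inner ℝ U U : ℝ)) • U)
      (Y - ((inner ℝ Y U : ℝ) / (inner ℝ U U : ℝ)) • U) : ℝ)
      = (inner ℝ X Y : ℝ) - (inner ℝ X U : ℝ) * (inner ℝ Y U : ℝ) / (inner ℝ U U : ℝ) := by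
    simp only [inner_sub_left, inner_sub_right, real_inner_smul_left, real_inner_smul_right]
    simp only [real_inner_comm U Y, real_inner_comm U X]
    set A : ℝ := inner ℝ X Y
    set B : ℝ := inner ℝ X U with hB
    set C : ℝ := inner ℝ Y U
    set D : ℝ := inner ℝ U U with hD
    field_simp
    ring
  rw [expand]
  exact h

/-- The tetrahedra obtained by coning a face of a regular icosahedron to its center are
acute: any tetrahedron with equilateral base of side `s` and apex at distance
`R = s·sin(2π/5)` (the circumradius of the icosahedron) from each base vertex has all
six dihedral angles strictly less than `π/2`. -/
theorem icosahedron_cone_tetrahedra_acute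
    (a b c o : EuclideanSpace ℝ (Fin 3)) (s : ℝ) (hs : 0 < s)
    (hab : dist a b = s) (hbc : dist b c = s) (hac : dist a c = s)
    (hoa : dist o a = s * Real.sin (2 * π / 5))
    (hob : dist o b = s * Real.sin (2 * π / 5))
    (hoc : dist o c = s * Real.sin (2 * π / 5)) :
    IsAcuteTetra a b c o := by
  set r := Real.sin (2 * π / 5) with hrdef
  have hpi := Real.pi_pos
  have hr : Real.sqrt 2 / 2 < r := by
    rw [hrdef, ← Real.sin_pi_div_four]
    apply Real.sin_lt_sin_of_lt_of_le_pi_div_two <;> linarith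
  have hr0 : 0 < r := lt_trans (by positivity) hr
  have hr2 : 1 / 2 < r ^ 2 := by
    nlinarith [Real.sq_sqrt (by norm_num : (2:ℝ) ≥ 0), Real.sqrt_nonneg 2]
  have hba : dist b a = s := by rw [dist_comm]; exact hab
  have hca : dist c a = s := by rw [dist_comm]; exact hac
  have hcb : dist c b = s := by rw [dist_comm]; exact hbc
  have hao : dist a o = s * r := by rw [dist_comm]; exact hoa
  have hbo : dist b o = s * r := by rw [dist_comm]; exact hob
  have hco : dist c o = s * r := by rw [dist_comm]; exact hoc
  have hne_ab : a ≠ b := dist_pos.mp (by rw [hab]; exact hs)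
  have hne_ac : a ≠ c := dist_pos.mp (by rw [hac]; exact hs)
  have hne_bc : b ≠ c := dist_pos.mp (by rw [hbc]; exact hs)
  have hRpos : 0 < s * r := mul_pos hs hr0
  have hne_ao : a ≠ o := dist_pos.mp (by rw [hao]; exact hRpos)
  have hne_bo : b ≠ o := dist_pos.mp (by rw [hbo]; exact hRpos)
  have hne_co : c ≠ o := dist_pos.mp (by rw [hco]; exact hRpos)
  have hs2 : (0:ℝ) < s ^ 2 := by positivity
  refine ⟨?_, ?_, ?_, ?_, ?_, ?_⟩
  · apply dihedral_lt _ _ _ _ hne_ab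
    simp only [inner_eq_dist, dist_self, hab, hbc, hac, hba, hca, hcb, hao, hbo, hco,
      hoa, hob, hoc]
    rw [sub_pos, div_lt_iff₀ (by norm_num; positivity)]
    nlinarith [hs2, hr2, mul_pos hs2 hs2]
  · apply dihedral_lt _ _ _ _ hne_ac
    simp only [inner_eq_dist, dist_self, hab, hbc, hac, hba, hca, hcb, hao, hbo, hco,
      hoa, hob, hoc]
    rw [sub_pos, div_lt_iff₀ (by norm_num; positivity)]
    nlinarith [hs2, hr2, mul_pos hs2 hs2]
  · apply dihedral_lt _ _ _ _ hne_ao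
    simp only [inner_eq_dist, dist_self, hab, hbc, hac, hba, hca, hcb, hao, hbo, hco,
      hoa, hob, hoc]
    rw [sub_pos, div_lt_iff₀ (by norm_num; positivity)]
    nlinarith [hs2, hr2, mul_pos hs2 hs2]
  · apply dihedral_lt _ _ _ _ hne_bc
    simp only [inner_eq_dist, dist_self, hab, hbc, hac, hba, hca, hcb, hao, hbo, hco,
      hoa, hob, hoc]
    rw [sub_pos, div_lt_iff₀ (by norm_num; positivity)]
    nlinarith [hs2, hr2, mul_pos hs2 hs2]
  · apply dihedral_lt _ _ _ _ hne_bo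
    simp only [inner_eq_dist, dist_self, hab, hbc, hac, hba, hca, hcb, hao, hbo, hco,
      hoa, hob, hoc]
    rw [sub_pos, div_lt_iff₀ (by norm_num; positivity)]
    nlinarith [hs2, hr2, mul_pos hs2 hs2]
  · apply dihedral_lt _ _ _ _ hne_co
    simp only [inner_eq_dist, dist_self, hab, hbc, hac, hba, hca, hcb, hao, hbo, hco,
      hoa, hob, hoc]
    rw [sub_pos, div_lt_iff₀ (by norm_num; positivity)]
    nlinarith [hs2, hr2, mul_pos hs2 hs2]
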